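/- In the Black–Scholes model dx_t = σ x_t dw_t (r = 0, σ > 0, x₀ > 0), the Delta of the forward-start floating-strike Asian call with payoff g(X_T) = (x_T - (1/(T - t₁)) ∫_{t₁}^{T} x_u du)⁺, 0 < t₁ < T, satisfies Δ_{x₀} E[g(X_T)] = E[ g(X_T) · w_{t₁}/(t₁ σ x₀) ]. -/

import Mathlib

open Filter Topology MeasureTheory ProbabilityTheory Real intervalIntegral
open scoped NNReal ENNReal


theorem riemann_tendsto {f : ℝ → ℝ} (hf : Continuous f) {a b : ℝ} (hab : a < b) :
    Tendsto (fun n : ℕ => ((b - a) / n) * ∑ k ∈ Finset.range n, f (a + k * ((b - a) / n)))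
      atTop (𝓝 (∫ x in a..b, f x)) := by
  rw [Metric.tendsto_atTop]
  intro ε hε
  have hba : (0:ℝ) < b - a := sub_pos.mpr hab
  set ε' : ℝ := ε / (2 * (b - a)) with hε'def
  have hε' : 0 < ε' := by positivity
  have huc : UniformContinuousOn f (Set.Icc a b) :=
    isCompact_Icc.uniformContinuousOn_of_continuous hf.continuousOn
  obtain ⟨δ, hδ, hδ'⟩ := Metric.uniformContinuousOn_iff.mp huc ε' hε'
  obtain ⟨N, hN⟩ : ∃ N : ℕ, (b - a) / δ < N := exists_nat_gt _
  refine ⟨N + 1, fun n hn => ?_⟩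
  have hnpos : (0:ℝ) < n := by
    have : 1 ≤ n := le_trans (Nat.le_add_left 1 N) hn
    exact_mod_cast Nat.lt_of_lt_of_le Nat.zero_lt_one this
  set h : ℝ := (b - a) / n with hh
  have hhpos : 0 < h := by positivity
  have hhδ : h < δ := by
    rw [hh, div_lt_iff₀ hnpos]
    have h1 : (b - a) / δ < (n:ℝ) := by
      refine lt_of_lt_of_le hN ?_
      exact_mod_cast Nat.le_of_succ_le hn
    calc b - a = ((b - a)/δ) * δ := by field_simp
    _ < n * δ := by exact mul_lt_mul_of_pos_right h1 hδ
    _ = δ * n := mul_comm _ _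
  set x : ℕ → ℝ := fun k => a + k * h with hx
  have hx0 : x 0 = a := by simp [hx]
  have hxn : x n = b := by
    simp only [hx, hh]
    field_simp
    ring
  have hstep : ∀ k : ℕ, x (k+1) - x k = h := by
    intro k
    simp only [hx]
    push_cast
    ring
  have hxmem : ∀ k : ℕ, k ≤ n → x k ∈ Set.Icc a b := by
    intro k hk
    constructor
    · simp only [hx]
      nlinarith [Nat.cast_nonneg (α := ℝ) k]
    · have : (k:ℝ) * h ≤ n * h := by
        apply mul_le_mul_of_nonneg_right _ hhpos.le
        exact_mod_cast hk
      have hxnval : a + (n:ℝ) * h = b := by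
        rw [hh]; field_simp; ring
      simp only [hx]
      linarith
  have hint : ∀ k : ℕ, IntervalIntegrable f MeasureTheory.volume (x k) (x (k+1)) :=
    fun k => hf.intervalIntegrable _ _
  have hsum : ∑ k ∈ Finset.range n, ∫ t in x k..x (k+1), f t = ∫ t in a..b, f t := by
    rw [← hx0, ← hxn]
    exact sum_integral_adjacent_intervals (fun k _ => hint k)
  have hterm : ∀ k ∈ Finset.range n,
      |h * f (x k) - ∫ t in x k..x (k+1), f t| ≤ ε' * h := by
    intro k hk
    rw [Finset.mem_range] at hk
    have hconst : h * f (x k) = ∫ _t in x k..x (k+1), f (x k) := by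
      rw [intervalIntegral.integral_const, hstep k, smul_eq_mul]
    rw [hconst, ← intervalIntegral.integral_sub (intervalIntegrable_const) (hint k)]
    have hle : x k ≤ x (k+1) := by nlinarith [hstep k]
    have hbound : ∀ t ∈ Set.uIoc (x k) (x (k+1)), ‖f (x k) - f t‖ ≤ ε' := by
      intro t ht
      rw [Set.uIoc_of_le hle] at ht
      have hxk := hxmem k hk.le
      have hxk1 := hxmem (k+1) hk
      have htmem : t ∈ Set.Icc a b := ⟨le_trans hxk.1 ht.1.le, le_trans ht.2 hxk1.2⟩
      have hdist : dist (x k) t < δ := by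
        rw [Real.dist_eq, abs_sub_comm, abs_of_nonneg (by linarith [ht.1.le] : (0:ℝ) ≤ t - x k)]
        have : t - x k ≤ h := by
          have := hstep k
          linarith [ht.2]
        linarith
      exact le_of_lt (hδ' _ hxk _ htmem hdist)
    have := intervalIntegral.norm_integral_le_of_norm_le_const hbound
    rw [hstep k] at this
    calc |∫ t in x k..x (k+1), (f (x k) - f t)| ≤ ε' * |h| := this
    _ = ε' * h := by rw [abs_of_pos hhpos]
  have hmain : dist (h * ∑ k ∈ Finset.range n, f (x k)) (∫ t in a..b, f t) ≤ ε' * (b - a) := by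
    rw [Real.dist_eq, ← hsum, Finset.mul_sum, ← Finset.sum_sub_distrib]
    calc |∑ k ∈ Finset.range n, (h * f (x k) - ∫ t in x k..x (k+1), f t)|
        ≤ ∑ k ∈ Finset.range n, |h * f (x k) - ∫ t in x k..x (k+1), f t| :=
          Finset.abs_sum_le_sum_abs _ _
      _ ≤ ∑ _k ∈ Finset.range n, ε' * h := Finset.sum_le_sum hterm
      _ = n * (ε' * h) := by rw [Finset.sum_const, Finset.card_range, nsmul_eq_mul]
      _ = ε' * (n * h) := by ring
      _ = ε' * (b - a) := by rw [hh]; field_simp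
  have : ε' * (b - a) < ε := by
    rw [hε'def]
    rw [div_mul_eq_mul_div, mul_comm]
    rw [div_lt_iff₀ (by positivity)]
    nlinarith
  exact lt_of_le_of_lt hmain this



lemma gauss_tilt (σ : ℝ) (v : ℝ≥0) (hv : v ≠ 0) (x : ℝ) :
    gaussianPDFReal 0 v x * Real.exp (σ * x - σ ^ 2 * (v:ℝ) / 2)
      = gaussianPDFReal (σ * (v:ℝ)) v x := by
  have hv' : (0:ℝ) < (v:ℝ) := by positivity
  unfold gaussianPDFReal
  rw [mul_assoc, ← Real.exp_add]
  congr 1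
  field_simp
  ring

lemma gauss_pdf_even (v : ℝ≥0) (x : ℝ) :
    gaussianPDFReal 0 v (-x) = gaussianPDFReal 0 v x := by
  unfold gaussianPDFReal
  congr 2
  ring

lemma gauss_pdf_mean (m : ℝ) (v : ℝ≥0) (hv : v ≠ 0) :
    ∫ x, x * gaussianPDFReal m v x = m := by
  have hv' : (0:ℝ) < (v:ℝ) := by positivity
  have hshift : ∫ x, x * gaussianPDFReal m v x
      = ∫ y, (y + m) * gaussianPDFReal m v (y + m) := by
    rw [integral_add_right_eq_self (fun x => x * gaussianPDFReal m v x) m]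
  have hpdfshift : ∀ y : ℝ, gaussianPDFReal m v (y + m) = gaussianPDFReal 0 v y := by
    intro y
    rw [gaussianPDFReal_add, sub_self]
  have hint1 : Integrable (fun y : ℝ => y * gaussianPDFReal 0 v y) := by
    have h0 : Integrable (fun y : ℝ => y * Real.exp (-(2 * (v:ℝ))⁻¹ * y ^ 2)) :=
      integrable_mul_exp_neg_mul_sq (by positivity)
    have := h0.const_mul (√(2 * π * (v:ℝ)))⁻¹
    apply this.congr
    filter_upwards with y
    unfold gaussianPDFReal
    ring_nf
  have hint2 : Integrable (fun y : ℝ => m * gaussianPDFReal 0 v y) :=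
    (integrable_gaussianPDFReal 0 v).const_mul m
  have hodd : ∫ y, y * gaussianPDFReal 0 v y = 0 := by
    have hneg := integral_neg_eq_self (fun z : ℝ => z * gaussianPDFReal 0 v z) (volume : Measure ℝ)
    simp only [gauss_pdf_even, neg_mul, MeasureTheory.integral_neg] at hneg
    linarith
  rw [hshift]
  have : ∀ y : ℝ, (y + m) * gaussianPDFReal m v (y + m)
      = y * gaussianPDFReal 0 v y + m * gaussianPDFReal 0 v y := by
    intro y; rw [hpdfshift]; ring
  simp only [this]
  rw [integral_add hint1 hint2, hodd, zero_add, MeasureTheory.integral_const_mul m,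
    integral_gaussianPDFReal_eq_one 0 hv, mul_one]

lemma gauss_integral_eq (v : ℝ≥0) (hv : v ≠ 0) (g : ℝ → ℝ) :
    ∫ x, g x ∂(gaussianReal 0 v) = ∫ x, gaussianPDFReal 0 v x * g x := by
  rw [gaussianReal_of_var_ne_zero 0 hv]
  have hpdf : (gaussianPDF 0 v) = fun x => ((Real.toNNReal (gaussianPDFReal 0 v x) : ℝ≥0) : ℝ≥0∞) := by
    funext x
    rfl
  rw [hpdf, integral_withDensity_eq_integral_smul ((measurable_gaussianPDFReal 0 v).real_toNNReal)]
  congr 1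
  funext x
  rw [NNReal.smul_def, Real.coe_toNNReal _ (gaussianPDFReal_nonneg 0 v x), smul_eq_mul]

lemma gauss_exp_int (σ : ℝ) (v : ℝ≥0) (hv : v ≠ 0) :
    ∫ x, Real.exp (σ * x - σ ^ 2 * (v:ℝ) / 2) ∂(gaussianReal 0 v) = 1 := by
  rw [gauss_integral_eq v hv]
  simp only [gauss_tilt σ v hv]
  exact integral_gaussianPDFReal_eq_one _ hv

lemma gauss_xexp_int (σ : ℝ) (v : ℝ≥0) (hv : v ≠ 0) :
    ∫ x, x * Real.exp (σ * x - σ ^ 2 * (v:ℝ) / 2) ∂(gaussianReal 0 v) = σ * (v:ℝ) := by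
  rw [gauss_integral_eq v hv]
  have : ∀ x : ℝ, gaussianPDFReal 0 v x * (x * Real.exp (σ * x - σ ^ 2 * (v:ℝ) / 2))
      = x * gaussianPDFReal (σ * (v:ℝ)) v x := by
    intro x
    rw [← gauss_tilt σ v hv]
    ring
  simp only [this]
  exact gauss_pdf_mean _ v hv


lemma max_factor (c a : ℝ) (hc : 0 ≤ c) : max (c * a) 0 = c * max a 0 := by
  rw [mul_max_of_nonneg a 0 hc, mul_zero]


theorem statement19 {Ω : Type*} [MeasurableSpace Ω] (μ : Measure Ω) [IsProbabilityMeasure μ]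
    (w : ℝ → Ω → ℝ)
    (hwmeas : ∀ t, Measurable (w t))
    (hwcont : ∀ ω, Continuous fun t => w t ω)
    (hw0 : ∀ ω, w 0 ω = 0)
    -- Brownian increments are centered Gaussian:
    (hgauss : ∀ s t : ℝ, 0 ≤ s → s ≤ t →
      Measure.map (fun ω => w t ω - w s ω) μ = gaussianReal 0 (t - s).toNNReal)
    (T t₁ σ x₀ : ℝ) (ht₁ : 0 < t₁) (ht₁T : t₁ < T) (hσ : 0 < σ) (hx : 0 < x₀)
    -- the post-`t₁` increments are independent of `w_{t₁}`:
    (hindep : IndepFun (fun ω => w t₁ ω) (fun ω => fun u : ℝ => w (t₁ + u) ω - w t₁ ω) μ)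
    (payoff : ℝ → Ω → ℝ)
    (hpay : ∀ y ω, payoff y ω =
      max (y * Real.exp (σ * w T ω - σ ^ 2 * T / 2)
        - (1 / (T - t₁)) * ∫ u in t₁..T, y * Real.exp (σ * w u ω - σ ^ 2 * u / 2)) 0)
    (hint1 : Integrable (payoff x₀) μ)
    (hint2 : Integrable (fun ω => payoff x₀ ω * w t₁ ω) μ) :
    HasDerivAt (fun y : ℝ => ∫ ω, payoff y ω ∂μ)
      (∫ ω, payoff x₀ ω * (w t₁ ω / (t₁ * σ * x₀)) ∂μ) x₀ := by
  have hTt : (0:ℝ) < T - t₁ := sub_pos.mpr ht₁T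
  -- the lognormal factor at time t₁
  set A : Ω → ℝ := fun ω => Real.exp (σ * w t₁ ω - σ ^ 2 * t₁ / 2) with hA
  -- the independent post-t₁ factor
  set H : Ω → ℝ := fun ω =>
    max (Real.exp (σ * (w T ω - w t₁ ω) - σ ^ 2 * (T - t₁) / 2)
      - (1 / (T - t₁)) *
        ∫ u in t₁..T, Real.exp (σ * (w u ω - w t₁ ω) - σ ^ 2 * (u - t₁) / 2)) 0 with hH
  have hApos : ∀ ω, 0 < A ω := fun ω => Real.exp_pos _
  have hAmeas : Measurable A := by
    apply Real.measurable_exp.comp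
    exact ((hwmeas t₁).const_mul σ).sub measurable_const
  -- exponential splitting
  have hAe : ∀ ω (s : ℝ), A ω * Real.exp (σ * (w s ω - w t₁ ω) - σ ^ 2 * (s - t₁) / 2)
      = Real.exp (σ * w s ω - σ ^ 2 * s / 2) := by
    intro ω s
    rw [hA]
    rw [← Real.exp_add]
    congr 1
    ring
  -- factorization of the payoff
  have hfac : ∀ ω, payoff x₀ ω = x₀ * (A ω * H ω) := by
    intro ω
    rw [hpay]
    simp only [hH]
    have hIeq : (∫ u in t₁..T, x₀ * Real.exp (σ * w u ω - σ ^ 2 * u / 2))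
        = (x₀ * A ω) * ∫ u in t₁..T, Real.exp (σ * (w u ω - w t₁ ω) - σ ^ 2 * (u - t₁) / 2) := by
      rw [← intervalIntegral.integral_const_mul]
      apply intervalIntegral.integral_congr
      intro u _
      simp only [← hAe ω u]
      ring
    rw [hIeq, ← hAe ω T]
    rw [show x₀ * (A ω * Real.exp (σ * (w T ω - w t₁ ω) - σ ^ 2 * (T - t₁) / 2))
          - 1 / (T - t₁) * (x₀ * A ω *
            ∫ u in t₁..T, Real.exp (σ * (w u ω - w t₁ ω) - σ ^ 2 * (u - t₁) / 2))
        = (x₀ * A ω) * (Real.exp (σ * (w T ω - w t₁ ω) - σ ^ 2 * (T - t₁) / 2)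
          - 1 / (T - t₁) * ∫ u in t₁..T,
              Real.exp (σ * (w u ω - w t₁ ω) - σ ^ 2 * (u - t₁) / 2)) from by ring]
    rw [max_factor _ _ (by positivity : (0:ℝ) ≤ x₀ * A ω), mul_assoc]
  -- positive homogeneity of the payoff
  have hhom : ∀ y : ℝ, 0 ≤ y → ∀ ω, payoff y ω = (y / x₀) * payoff x₀ ω := by
    intro y hy ω
    rw [hpay, hpay]
    have hIeq : (∫ u in t₁..T, y * Real.exp (σ * w u ω - σ ^ 2 * u / 2))
        = (y / x₀) * ∫ u in t₁..T, x₀ * Real.exp (σ * w u ω - σ ^ 2 * u / 2) := by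
      rw [← intervalIntegral.integral_const_mul]
      apply intervalIntegral.integral_congr
      intro u _
      field_simp
    rw [hIeq]
    rw [show y * Real.exp (σ * w T ω - σ ^ 2 * T / 2)
          - 1 / (T - t₁) * ((y / x₀) * ∫ u in t₁..T, x₀ * Real.exp (σ * w u ω - σ ^ 2 * u / 2))
        = (y / x₀) * (x₀ * Real.exp (σ * w T ω - σ ^ 2 * T / 2)
          - 1 / (T - t₁) * ∫ u in t₁..T, x₀ * Real.exp (σ * w u ω - σ ^ 2 * u / 2)) from by
      field_simp]
    rw [max_factor _ _ (div_nonneg hy hx.le)]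
  -- the law of w t₁
  have hvne : Real.toNNReal t₁ ≠ 0 := by
    simp only [ne_eq, Real.toNNReal_eq_zero, not_le]
    exact ht₁
  have hvcoe : ((Real.toNNReal t₁ : ℝ≥0) : ℝ) = t₁ := Real.coe_toNNReal t₁ ht₁.le
  have hmap : Measure.map (w t₁) μ = gaussianReal 0 (Real.toNNReal t₁) := by
    have h := hgauss 0 t₁ le_rfl ht₁.le
    rw [sub_zero] at h
    rw [show (fun ω => w t₁ ω - w 0 ω) = w t₁ from funext fun ω => by rw [hw0, sub_zero]] at h
    exact h
  -- expectations of the lognormal factor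
  have hEA : ∫ ω, A ω ∂μ = 1 := by
    have hg : Measurable fun x : ℝ => Real.exp (σ * x - σ ^ 2 * t₁ / 2) :=
      Real.measurable_exp.comp ((measurable_id.const_mul σ).sub measurable_const)
    have h5 : (∫ x, Real.exp (σ * x - σ ^ 2 * t₁ / 2) ∂(Measure.map (w t₁) μ))
        = ∫ ω, Real.exp (σ * w t₁ ω - σ ^ 2 * t₁ / 2) ∂μ :=
      integral_map (hwmeas t₁).aemeasurable hg.aestronglyMeasurable
    rw [hA, ← h5, hmap]
    have h6 := gauss_exp_int σ (Real.toNNReal t₁) hvne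
    rw [hvcoe] at h6
    exact h6
  have hEAw : ∫ ω, A ω * w t₁ ω ∂μ = σ * t₁ := by
    have hg : Measurable fun x : ℝ => x * Real.exp (σ * x - σ ^ 2 * t₁ / 2) :=
      measurable_id.mul
        (Real.measurable_exp.comp ((measurable_id.const_mul σ).sub measurable_const))
    have h5 : (∫ x, x * Real.exp (σ * x - σ ^ 2 * t₁ / 2) ∂(Measure.map (w t₁) μ))
        = ∫ ω, w t₁ ω * Real.exp (σ * w t₁ ω - σ ^ 2 * t₁ / 2) ∂μ :=
      integral_map (hwmeas t₁).aemeasurable hg.aestronglyMeasurable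
    have h7 : ∫ ω, A ω * w t₁ ω ∂μ
        = ∫ ω, w t₁ ω * Real.exp (σ * w t₁ ω - σ ^ 2 * t₁ / 2) ∂μ := by
      rw [hA]
      congr 1
      funext ω
      ring
    rw [h7, ← h5, hmap]
    have h6 := gauss_xexp_int σ (Real.toNNReal t₁) hvne
    rw [hvcoe] at h6
    exact h6
  -- the comap σ-algebra of the increments
  set incr : Ω → ℝ → ℝ := fun ω => fun u : ℝ => w (t₁ + u) ω - w t₁ ω with hincr
  have hincrmeas : Measurable incr :=
    measurable_pi_lambda incr fun u => (hwmeas (t₁ + u)).sub (hwmeas t₁)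
  have hincrG : Measurable[MeasurableSpace.comap incr MeasurableSpace.pi] incr :=
    comap_measurable incr
  have hevalG : ∀ s : ℝ,
      Measurable[MeasurableSpace.comap incr MeasurableSpace.pi]
        fun ω => w (t₁ + s) ω - w t₁ ω :=
    fun s => (measurable_pi_apply s).comp hincrG
  -- Riemann-sum approximations of H
  set Hn : ℕ → Ω → ℝ := fun n ω =>
    max (Real.exp (σ * (w T ω - w t₁ ω) - σ ^ 2 * (T - t₁) / 2)
      - (1 / (T - t₁)) * (((T - t₁) / (n:ℝ)) * ∑ k ∈ Finset.range n,
          Real.exp (σ * (w (t₁ + (k:ℝ) * ((T - t₁) / (n:ℝ))) ω - w t₁ ω)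
            - σ ^ 2 * ((t₁ + (k:ℝ) * ((T - t₁) / (n:ℝ))) - t₁) / 2))) 0 with hHn
  have hHnG : ∀ n, Measurable[MeasurableSpace.comap incr MeasurableSpace.pi] (Hn n) := by
    intro n
    letI mG : MeasurableSpace Ω := MeasurableSpace.comap incr MeasurableSpace.pi
    simp only [hHn]
    have hE : Measurable[mG] fun ω =>
        Real.exp (σ * (w T ω - w t₁ ω) - σ ^ 2 * (T - t₁) / 2) := by
      have h1 : Measurable[mG] fun ω => w (t₁ + (T - t₁)) ω - w t₁ ω := hevalG (T - t₁)
      rw [show t₁ + (T - t₁) = T from by ring] at h1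
      exact Real.measurable_exp.comp ((h1.const_mul σ).sub measurable_const)
    have hS : Measurable[mG] fun ω => ∑ k ∈ Finset.range n,
        Real.exp (σ * (w (t₁ + (k:ℝ) * ((T - t₁) / (n:ℝ))) ω - w t₁ ω)
          - σ ^ 2 * ((t₁ + (k:ℝ) * ((T - t₁) / (n:ℝ))) - t₁) / 2) := by
      apply Finset.measurable_sum
      intro k _
      exact Real.measurable_exp.comp
        (((hevalG ((k:ℝ) * ((T - t₁) / (n:ℝ)))).const_mul σ).sub measurable_const)
    exact (hE.sub ((hS.const_mul ((T - t₁) / (n:ℝ))).const_mul (1 / (T - t₁)))).max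
      measurable_const
  have htend : ∀ ω, Filter.Tendsto (fun n => Hn n ω) Filter.atTop (nhds (H ω)) := by
    intro ω
    have h1 : Continuous fun u : ℝ => σ * (w u ω - w t₁ ω) - σ ^ 2 * (u - t₁) / 2 :=
      (continuous_const.mul ((hwcont ω).sub continuous_const)).sub
        ((continuous_const.mul (continuous_id.sub continuous_const)).div_const 2)
    have hcont : Continuous fun u : ℝ =>
        Real.exp (σ * (w u ω - w t₁ ω) - σ ^ 2 * (u - t₁) / 2) := Real.continuous_exp.comp h1
    have hR := riemann_tendsto hcont ht₁T
    have h2 := (Filter.Tendsto.sub (tendsto_const_nhds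
        (x := Real.exp (σ * (w T ω - w t₁ ω) - σ ^ 2 * (T - t₁) / 2)))
        (hR.const_mul (1 / (T - t₁)))).max
      (tendsto_const_nhds (x := (0:ℝ)) (f := Filter.atTop (α := ℕ)))
    simp only [hHn, hH]
    exact h2
  have hHG : Measurable[MeasurableSpace.comap incr MeasurableSpace.pi] H := by
    letI mG : MeasurableSpace Ω := MeasurableSpace.comap incr MeasurableSpace.pi
    exact measurable_of_tendsto_metrizable (fun n => hHnG n) (tendsto_pi_nhds.mpr htend)
  have hHmeas : Measurable H := hHG.mono hincrmeas.comap_le le_rfl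
  -- independence
  have hWH : IndepFun (fun ω => w t₁ ω) H μ := by
    rw [IndepFun_iff] at hindep ⊢
    intro t u h1 h2
    obtain ⟨B, hB, rfl⟩ := h2
    exact hindep t _ h1 (hHG hB)
  have hψ1 : Measurable fun x : ℝ => Real.exp (σ * x - σ ^ 2 * t₁ / 2) :=
    Real.measurable_exp.comp ((measurable_id.const_mul σ).sub measurable_const)
  have hiAH : IndepFun A H μ := hWH.comp hψ1 measurable_id
  have hψ2 : Measurable fun x : ℝ => Real.exp (σ * x - σ ^ 2 * t₁ / 2) * x :=
    hψ1.mul measurable_id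
  have hiAwH : IndepFun (fun ω => A ω * w t₁ ω) H μ := hWH.comp hψ2 measurable_id
  -- expectations
  set IH : ℝ := ∫ ω, H ω ∂μ with hIH
  have hHsm : AEStronglyMeasurable H μ := hHmeas.aestronglyMeasurable
  have hAH : ∫ ω, A ω * H ω ∂μ = IH := by
    rw [hiAH.integral_fun_mul_eq_mul_integral hAmeas.aestronglyMeasurable hHsm, hEA, one_mul, hIH]
  have hAwH : ∫ ω, (A ω * w t₁ ω) * H ω ∂μ = σ * t₁ * IH := by
    rw [hiAwH.integral_fun_mul_eq_mul_integral ((hAmeas.mul (hwmeas t₁)).aestronglyMeasurable) hHsm, hEAw, hIH]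
  have hI1 : ∫ ω, payoff x₀ ω ∂μ = x₀ * IH := by
    calc ∫ ω, payoff x₀ ω ∂μ = ∫ ω, x₀ * (A ω * H ω) ∂μ := by simp only [hfac]
    _ = x₀ * ∫ ω, A ω * H ω ∂μ := MeasureTheory.integral_const_mul x₀ _
    _ = x₀ * IH := by rw [hAH]
  have hI2 : ∫ ω, payoff x₀ ω * w t₁ ω ∂μ = x₀ * (σ * t₁ * IH) := by
    have h3 : ∀ ω, payoff x₀ ω * w t₁ ω = x₀ * ((A ω * w t₁ ω) * H ω) := fun ω => by
      rw [hfac]; ring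
    calc ∫ ω, payoff x₀ ω * w t₁ ω ∂μ = ∫ ω, x₀ * ((A ω * w t₁ ω) * H ω) ∂μ := by
          simp only [h3]
    _ = x₀ * ∫ ω, (A ω * w t₁ ω) * H ω ∂μ := MeasureTheory.integral_const_mul x₀ _
    _ = x₀ * (σ * t₁ * IH) := by rw [hAwH]
  have hD : ∫ ω, payoff x₀ ω * (w t₁ ω / (t₁ * σ * x₀)) ∂μ = IH := by
    have h4 : ∀ ω, payoff x₀ ω * (w t₁ ω / (t₁ * σ * x₀))
        = (payoff x₀ ω * w t₁ ω) * (t₁ * σ * x₀)⁻¹ := fun ω => by ring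
    simp only [h4]
    rw [MeasureTheory.integral_mul_const, hI2]
    field_simp
  have heq : (fun y : ℝ => ∫ ω, payoff y ω ∂μ) =ᶠ[nhds x₀] fun y => y * IH := by
    filter_upwards [Ioi_mem_nhds hx] with y hy
    have h0 : ∫ ω, payoff y ω ∂μ = ∫ ω, (y / x₀) * payoff x₀ ω ∂μ := by
      simp only [hhom y (le_of_lt hy)]
    rw [h0, MeasureTheory.integral_const_mul, hI1]
    field_simp
  have hd : HasDerivAt (fun y : ℝ => y * IH) IH x₀ := by
    simpa using (hasDerivAt_id x₀).mul_const IH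
  rw [hD]
  exact hd.congr_of_eventuallyEq heq
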